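/- For every real number q with 0 < q < 1, one has log(q) · log(1 − q) ≤ (log 2)², with equality if and only if q = 1/2. (Here log is the natural logarithm.) -/

import Mathlib

open Real Set

private lemma key_aux {a : ℝ} (ha0 : 0 < a) (ha : a < 1/2) :
    a * Real.log a < (1 - a) * Real.log (1 - a) := by
  have h1a : 0 < 1 - a := by linarith
  have hp : 1 < (1 - a) / a := by
    rw [lt_div_iff₀ ha0]; linarith
  have hb := one_add_mul_self_lt_rpow_one_add (s := -a) (by linarith) (by linarith)
    (p := (1 - a) / a) hp
  have h1 : 1 + (1 - a) / a * (-a) = a := by field_simp; ring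
  rw [h1] at hb
  have h2 : (1 + -a : ℝ) = 1 - a := by ring
  rw [h2] at hb
  -- hb : a < (1 - a) ^ ((1 - a) / a)
  have hlog : Real.log a < Real.log ((1 - a) ^ ((1 - a) / a)) :=
    Real.log_lt_log ha0 hb
  rw [Real.log_rpow h1a] at hlog
  have := (mul_lt_mul_iff_right₀ ha0).2 hlog
  calc a * Real.log a < a * ((1 - a) / a * Real.log (1 - a)) := this
    _ = (1 - a) * Real.log (1 - a) := by field_simp

private lemma hasDerivAt_h {x : ℝ} (hx0 : 0 < x) (hx1 : x < 1) :
    HasDerivAt (fun y : ℝ => Real.log y * Real.log (1 - y))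
      (Real.log (1 - x) / x - Real.log x / (1 - x)) x := by
  have h1 : HasDerivAt Real.log (1 / x) x := by
    simpa [one_div] using Real.hasDerivAt_log hx0.ne'
  have h2 : HasDerivAt (fun y : ℝ => 1 - y) (-1 : ℝ) x := by
    simpa using (hasDerivAt_id x).const_sub 1
  have h3 : HasDerivAt (fun y : ℝ => Real.log (1 - y)) (-(1 / (1 - x))) x := by
    have := (Real.hasDerivAt_log (by linarith : (1 - x) ≠ 0)).comp x h2
    exact this.congr_deriv (by ring)
  have := h1.mul h3
  refine this.congr_deriv ?_
  ring

private lemma deriv_pos {x : ℝ} (hx0 : 0 < x) (hx : x < 1/2) :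
    0 < Real.log (1 - x) / x - Real.log x / (1 - x) := by
  have h1x : 0 < 1 - x := by linarith
  have key := key_aux hx0 hx
  rw [sub_pos, div_lt_div_iff₀ h1x hx0]
  nlinarith [key]

private lemma strict_lt {q : ℝ} (h0 : 0 < q) (h1 : q < 1) (hne : q ≠ 1/2) :
    Real.log q * Real.log (1 - q) < (Real.log 2) ^ 2 := by
  set h : ℝ → ℝ := fun y => Real.log y * Real.log (1 - y) with hh
  have hval : h (1/2) = (Real.log 2) ^ 2 := by
    have : (1 : ℝ) - 1/2 = 1/2 := by norm_num
    simp only [hh, this]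
    rw [show (1:ℝ)/2 = 2⁻¹ by norm_num, Real.log_inv]
    ring
  have cont : ∀ {a b : ℝ}, 0 < a → b < 1 → ContinuousOn h (Icc a b) := by
    intro a b ha hb
    apply ContinuousOn.mul
    · exact Real.continuousOn_log.comp continuousOn_id
        (fun x hx => by simp; rcases hx with ⟨h1, h2⟩; linarith)
    · apply Real.continuousOn_log.comp (by fun_prop)
      intro x hx
      rcases hx with ⟨hx1, hx2⟩
      simp only [Set.mem_compl_iff, Set.mem_singleton_iff]
      intro hcon
      have : x = 1 := by linarith [sub_eq_zero.mp hcon]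
      linarith
  rcases lt_or_gt_of_ne hne with hlt | hgt
  · -- q < 1/2 : h strictly mono on [q, 1/2]
    have mono : StrictMonoOn h (Icc q (1/2)) := by
      apply strictMonoOn_of_deriv_pos (convex_Icc _ _) (cont h0 (by norm_num))
      intro x hx
      rw [interior_Icc] at hx
      have hx0 : 0 < x := lt_trans h0 hx.1
      have hx2 : x < 1/2 := hx.2
      rw [(hasDerivAt_h hx0 (by linarith)).deriv]
      exact deriv_pos hx0 hx2
    have := mono (Set.left_mem_Icc.2 hlt.le) (Set.right_mem_Icc.2 hlt.le) hlt
    rwa [hval] at this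
  · -- q > 1/2 : h strictly anti on [1/2, q]
    have anti : StrictAntiOn h (Icc (1/2) q) := by
      apply strictAntiOn_of_deriv_neg (convex_Icc _ _) (cont (by norm_num) h1)
      intro x hx
      rw [interior_Icc] at hx
      have hx1 : 1/2 < x := hx.1
      have hx2 : x < 1 := lt_trans hx.2 h1
      rw [(hasDerivAt_h (by linarith) hx2).deriv]
      -- use key at 1 - x
      have h1x0 : 0 < 1 - x := by linarith
      have key := key_aux h1x0 (by linarith : 1 - x < 1/2)
      rw [show (1 : ℝ) - (1 - x) = x by ring] at key
      rw [sub_neg, div_lt_div_iff₀ (by linarith : (0:ℝ) < x) h1x0]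
      nlinarith [key]
    have := anti (Set.left_mem_Icc.2 hgt.le) (Set.right_mem_Icc.2 hgt.le) hgt
    rwa [hval] at this

/-- For every `q ∈ (0,1)`, `log q · log (1-q) ≤ (log 2)²`, with equality iff `q = 1/2`
(natural logarithm). -/
theorem log_mul_log_one_sub_le (q : ℝ) (h0 : 0 < q) (h1 : q < 1) :
    Real.log q * Real.log (1 - q) ≤ (Real.log 2) ^ 2 ∧
      (Real.log q * Real.log (1 - q) = (Real.log 2) ^ 2 ↔ q = 1 / 2) := by
  by_cases hq : q = 1/2
  · subst hq
    constructor
    · apply le_of_eq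
      rw [show (1:ℝ) - 1/2 = 2⁻¹ by norm_num, show (1:ℝ)/2 = 2⁻¹ by norm_num,
        Real.log_inv]
      ring
    · constructor <;> intro _ <;> first
        | rfl
        | (rw [show (1:ℝ) - 1/2 = 2⁻¹ by norm_num, show (1:ℝ)/2 = 2⁻¹ by norm_num,
            Real.log_inv]; ring)
  · have := strict_lt h0 h1 hq
    exact ⟨this.le, ⟨fun h => absurd h this.ne, fun h => absurd h hq⟩⟩
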